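/- Let G be a countable discrete group, H ≤ G a subgroup, X = G/H, and let μ be a probability measure on G such that r_q(μ) > 0 for every q ∈ (1,2]. Then the function p ↦ −p·log r_{p/(p−1)}(μ) is monotonically increasing on [2,∞); that is, whenever 2 ≤ p₀ ≤ p₁ one has −p₀·log r_{p₀/(p₀−1)}(μ) ≤ −p₁·log r_{p₁/(p₁−1)}(μ). -/

import Mathlib

open scoped ENNReal
open Filter Topology

noncomputable section

namespace PaperRD

variable {G : Type*} [Group G]

/-- The fiber summation (push-forward) `π_# f` of a real-valued function on `G`
along the projection `G → G ⧸ H` onto the space of left cosets. -/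
def fiberSum (H : Subgroup G) (f : G → ℝ) (x : G ⧸ H) : ℝ :=
  ∑' g : {g : G // (QuotientGroup.mk g : G ⧸ H) = x}, f (g : G)

/-- The `ℓ^q`-norm (valued in `ℝ≥0∞`) of a function on a type. -/
def lqNorm {X : Type*} {E : Type*} [Norm E] (q : ℝ) (ξ : X → E) : ℝ≥0∞ :=
  (∑' x : X, ENNReal.ofReal ‖ξ x‖ ^ q) ^ (1 / q)

/-- The quasi-regular convolution operator `λ_X(f)` acting on functions on `G ⧸ H`:
`(λ_X(f)ξ)(x) = ∑_{g ∈ G} f(g) ξ(g⁻¹ x)`. -/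
def lam (H : Subgroup G) (f : G → ℂ) (ξ : G ⧸ H → ℂ) (x : G ⧸ H) : ℂ :=
  ∑' g : G, f g * ξ ((g⁻¹ : G) • x)

/-- Operator norm (in `ℝ≥0∞`) of a map on functions, with respect to the `ℓ^q` norms:
the supremum of `‖Tξ‖_q` over the unit ball. -/
def opNorm {X : Type*} (q : ℝ) (T : (X → ℂ) → (X → ℂ)) : ℝ≥0∞ :=
  ⨆ ξ : {ξ : X → ℂ // lqNorm q ξ ≤ 1}, lqNorm q (T (ξ : X → ℂ))

/-- The spectral radius `r_q(μ) = lim_n ‖T_q^n‖^{1/n}`; since the sequence of norms is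
submultiplicative the limit exists and equals `inf_n ‖T_q^n‖^{1/n}`, which we take as
the definition. -/
def specRad (H : Subgroup G) (μ : G → ℝ) (q : ℝ) : ℝ :=
  (⨅ n : ℕ, opNorm q ((lam H (fun g => (μ g : ℂ)))^[n + 1]) ^ (1 / (n + 1 : ℝ))).toReal

/-- `c(G,H;μ) = sup_{p ∈ [2,∞)} ( -p · log r_{p/(p-1)}(μ) )`. -/
def cval (H : Subgroup G) (μ : G → ℝ) : ℝ :=
  sSup {y : ℝ | ∃ p : ℝ, 2 ≤ p ∧ y = -p * Real.log (specRad H μ (p / (p - 1)))}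

/-- Convolution of real functions on `G`. -/
def conv (f φ : G → ℝ) (g : G) : ℝ :=
  ∑' y : G, f y * φ (y⁻¹ * g)

open scoped Classical in
/-- Convolution powers `μ^{*n}` (with `μ^{*0} = δ_e`). -/
def convPow (μ : G → ℝ) : ℕ → G → ℝ
  | 0 => fun g => if g = 1 then 1 else 0
  | n + 1 => conv μ (convPow μ n)

/-- `ν_n = π_#(μ^{*n}) = μ^{*n} * δ_{eH}`, the distribution at time `n` of the
`μ`-random walk on `G ⧸ H` started at the base coset. -/
def walkDist (H : Subgroup G) (μ : G → ℝ) (n : ℕ) : G ⧸ H → ℝ :=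
  fiberSum H (convPow μ n)

/-- Shannon entropy `H(ν) = -∑ ν log ν` (with the convention `0 log 0 = 0`,
automatic since `Real.log 0 = 0`). -/
def shannon {X : Type*} (ν : X → ℝ) : ℝ :=
  -∑' x : X, ν x * Real.log (ν x)

/-- Rényi entropy of order `α`: `H_α(ν) = (1/(1-α)) log ∑ ν(x)^α`. -/
def renyi {X : Type*} (α : ℝ) (ν : X → ℝ) : ℝ :=
  (1 / (1 - α)) * Real.log (∑' x : X, ν x ^ α)

/-- Word length with respect to a generating set `S`. -/
def wordLength (S : Set G) (g : G) : ℕ :=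
  sInf {n : ℕ | ∃ l : List G, (∀ s ∈ l, s ∈ S) ∧ l.length = n ∧ l.prod = g}

/-- The mixed `(2,1)`-norm of a function on `G` relative to the pair `(G,H)`:
`‖f‖_{(2,1)} = ( ∑_{x ∈ G/H} ( ∑_{g ∈ x} |f(g)| )² )^{1/2}`. -/
def norm21 (H : Subgroup G) (f : G → ℂ) : ℝ :=
  Real.sqrt (∑' x : G ⧸ H,
    (∑' g : {g : G // (QuotientGroup.mk g : G ⧸ H) = x}, ‖f (g : G)‖) ^ 2)

/-- Convolution of complex functions on `G`. -/
def convC (f φ : G → ℂ) (g : G) : ℂ :=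
  ∑' y : G, f y * φ (y⁻¹ * g)

/-- The Haagerup-type norm `‖f‖_h` for the pair `(G,H)`:
the supremum of `‖f ∗ φ‖_{(2,1)}` over finitely supported nonnegative `φ` with
`‖φ‖_{(2,1)} ≤ 1`. -/
def hNorm (H : Subgroup G) (f : G → ℂ) : ℝ :=
  sSup {r : ℝ | ∃ φ : G → ℝ, (Function.support φ).Finite ∧ (∀ y, 0 ≤ φ y) ∧
    norm21 H (fun g => (φ g : ℂ)) ≤ 1 ∧
    r = norm21 H (convC f (fun g => (φ g : ℂ)))}

/-- The pair `(G,H)` has pair rapid decay w.r.t. the length `ℓ`, with exponent `s`. -/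
def HasPairRDWith (H : Subgroup G) (ℓ : G → ℕ) (s : ℝ) : Prop :=
  ∃ C : ℝ, 0 < C ∧ ∀ f : G → ℂ, (Function.support f).Finite →
    hNorm H f ≤ C * norm21 H (fun g => f g * (((1 + (ℓ g : ℝ)) ^ s : ℝ) : ℂ))

/-- The pair `(G,H)` has pair rapid decay w.r.t. the length `ℓ`. -/
def HasPairRD (H : Subgroup G) (ℓ : G → ℕ) : Prop :=
  ∃ s : ℝ, 0 < s ∧ HasPairRDWith H ℓ s

/-- Radial majorant `W(t) = sup { w(g) : ℓ(g) ≤ t }` of a weight `w`. -/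
def radialMaj (ℓ : G → ℕ) (w : G → ℝ) (t : ℕ) : ℝ :=
  sSup (w '' {g : G | ℓ g ≤ t})

/-- The pair `(G,H)` satisfies subexponential Lorentz control (`SLC_subexp`)
w.r.t. the length `ℓ`: there is a weight `w ≥ 1` with `‖f‖_h ≤ C ‖f·w‖_{(2,1)}`
for all finitely supported `f`, whose radial majorant `W` satisfies
`log W(t) / t → 0`. -/
def SLCsubexp (H : Subgroup G) (ℓ : G → ℕ) : Prop :=
  ∃ C : ℝ, 0 < C ∧ ∃ w : G → ℝ, (∀ g, 1 ≤ w g) ∧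
    (∀ f : G → ℂ, (Function.support f).Finite →
      hNorm H f ≤ C * norm21 H (fun g => f g * (w g : ℂ))) ∧
    Tendsto (fun t : ℕ => Real.log (radialMaj ℓ w t) / (t : ℝ)) atTop (𝓝 0)

end PaperRD


/-! ### Auxiliary development for `statement0`. -/

namespace Stmt0Aux

open PaperRD MeasureTheory

/-- Hölder with weights for tsums in `ℝ≥0∞`. -/
lemma tsum_holder_weights {ι : Type*} (u v : ι → ℝ≥0∞) {a b : ℝ} (ha : 0 ≤ a) (hb : 0 ≤ b)
    (hab : a + b = 1) :
    ∑' i, u i ^ a * v i ^ b ≤ (∑' i, u i) ^ a * (∑' i, v i) ^ b := by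
  letI : MeasurableSpace ι := ⊤
  haveI : MeasurableSingletonClass ι := ⟨fun _ => MeasurableSpace.measurableSet_top⟩
  calc ∑' i, u i ^ a * v i ^ b
      = ∫⁻ i, u i ^ a * v i ^ b ∂Measure.count := (lintegral_count _).symm
    _ ≤ (∫⁻ i, u i ∂Measure.count) ^ a * (∫⁻ i, v i ∂Measure.count) ^ b :=
        ENNReal.lintegral_mul_norm_pow_le measurable_from_top.aemeasurable
          measurable_from_top.aemeasurable ha hb hab
    _ = (∑' i, u i) ^ a * (∑' i, v i) ^ b := by rw [lintegral_count, lintegral_count]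

/-- Hölder with conjugate exponents for tsums in `ℝ≥0∞`. -/
lemma tsum_holder {ι : Type*} (f g : ι → ℝ≥0∞) {p q : ℝ} (hpq : p.HolderConjugate q) :
    ∑' i, f i * g i ≤ (∑' i, f i ^ p) ^ (1 / p) * (∑' i, g i ^ q) ^ (1 / q) := by
  letI : MeasurableSpace ι := ⊤
  haveI : MeasurableSingletonClass ι := ⟨fun _ => MeasurableSpace.measurableSet_top⟩
  calc ∑' i, f i * g i
      = ∫⁻ i, (f * g) i ∂Measure.count := (lintegral_count _).symm
    _ ≤ (∫⁻ i, f i ^ p ∂Measure.count) ^ (1 / p) * (∫⁻ i, g i ^ q ∂Measure.count) ^ (1 / q) :=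
        ENNReal.lintegral_mul_le_Lp_mul_Lq _ hpq measurable_from_top.aemeasurable
          measurable_from_top.aemeasurable
    _ = (∑' i, f i ^ p) ^ (1 / p) * (∑' i, g i ^ q) ^ (1 / q) := by
        rw [lintegral_count, lintegral_count]

variable {G : Type*} [Group G]

/-- The positive kernel operator on `G ⧸ H` with kernel `K`. -/
def kop (H : Subgroup G) (K : G → ℝ≥0∞) (η : G ⧸ H → ℝ≥0∞) (x : G ⧸ H) : ℝ≥0∞ :=
  ∑' g : G, K g * η ((g⁻¹ : G) • x)

/-- `ℓ^q`-"norm" of an `ℝ≥0∞`-valued function. -/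
def eLq {X : Type*} (q : ℝ) (η : X → ℝ≥0∞) : ℝ≥0∞ :=
  (∑' x : X, η x ^ q) ^ (1 / q)

def nu (μ : G → ℝ) (g : G) : ℝ≥0∞ := ENNReal.ofReal (μ g)

open scoped Classical in
def Kpow (μ : G → ℝ) : ℕ → G → ℝ≥0∞
  | 0 => fun g => if g = 1 then 1 else 0
  | n + 1 => fun g => ∑' y : G, nu μ y * Kpow μ n (y⁻¹ * g)

def Sn (H : Subgroup G) (μ : G → ℝ) (q : ℝ) (n : ℕ) : ℝ≥0∞ :=
  ⨆ η : {η : G ⧸ H → ℝ≥0∞ // eLq q η ≤ 1}, eLq q (kop H (Kpow μ n) η.1)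

def Rq (H : Subgroup G) (μ : G → ℝ) (q : ℝ) : ℝ≥0∞ :=
  ⨅ n : ℕ, Sn H μ q (n + 1) ^ (1 / (n + 1 : ℝ))

variable {H : Subgroup G} {μ : G → ℝ}

lemma kop_mono {K : G → ℝ≥0∞} {η η' : G ⧸ H → ℝ≥0∞} (h : ∀ y, η y ≤ η' y) (x : G ⧸ H) :
    kop H K η x ≤ kop H K η' x :=
  ENNReal.tsum_le_tsum fun g => mul_le_mul_right (h _) _

lemma kop_iterate (H : Subgroup G) (μ : G → ℝ) :
    ∀ (n : ℕ) (η : G ⧸ H → ℝ≥0∞), (kop H (nu μ))^[n] η = kop H (Kpow μ n) η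
  | 0, η => by
      funext x
      classical
      simp only [Function.iterate_zero, id_eq, kop, Kpow]
      rw [tsum_eq_single (1 : G) (by intro g hg; simp [hg])]
      simp
  | (n + 1), η => by
      funext x
      rw [Function.iterate_succ_apply', kop_iterate H μ n η]
      show kop H (nu μ) (kop H (Kpow μ n) η) x = kop H (Kpow μ (n + 1)) η x
      have step1 : kop H (nu μ) (kop H (Kpow μ n) η) x
          = ∑' y : G, ∑' g : G, nu μ y * Kpow μ n g * η (((y * g)⁻¹ : G) • x) := by
        refine tsum_congr fun y => ?_
        rw [kop, ← ENNReal.tsum_mul_left]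
        refine tsum_congr fun g => ?_
        rw [mul_assoc, mul_inv_rev, mul_smul]
      have step2 : ∀ y : G, (∑' g : G, nu μ y * Kpow μ n g * η (((y * g)⁻¹ : G) • x))
          = ∑' k : G, nu μ y * Kpow μ n (y⁻¹ * k) * η ((k⁻¹ : G) • x) := by
        intro y
        rw [← Equiv.tsum_eq (Equiv.mulLeft y)
          (fun k => nu μ y * Kpow μ n (y⁻¹ * k) * η ((k⁻¹ : G) • x))]
        refine tsum_congr fun g => ?_
        simp [Equiv.mulLeft]
      rw [step1]
      simp only [step2]
      rw [ENNReal.tsum_comm]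
      refine tsum_congr fun k => ?_
      show (∑' y : G, nu μ y * Kpow μ n (y⁻¹ * k) * η ((k⁻¹ : G) • x)) = _
      rw [ENNReal.tsum_mul_right]
      rfl

omit [Group G] in
lemma nu_mass' {μ : G → ℝ} (hμ0 : ∀ g, 0 ≤ μ g) (hμ1 : HasSum μ 1) :
    ∑' g : G, nu μ g = 1 := by
  simp only [nu]
  rw [← ENNReal.ofReal_tsum_of_nonneg hμ0 hμ1.summable, hμ1.tsum_eq, ENNReal.ofReal_one]

lemma Kpow_mass (hμ0 : ∀ g, 0 ≤ μ g) (hμ1 : HasSum μ 1) :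
    ∀ n : ℕ, ∑' g : G, Kpow μ n g = 1
  | 0 => by
      classical
      rw [show (Kpow μ 0 : G → ℝ≥0∞) = fun g => if g = 1 then 1 else 0 from rfl]
      rw [tsum_eq_single (1 : G) (by intro g hg; simp [hg])]
      simp
  | (n + 1) => by
      show (∑' g : G, ∑' y : G, nu μ y * Kpow μ n (y⁻¹ * g)) = 1
      rw [ENNReal.tsum_comm]
      have h1 : ∀ y : G, (∑' g : G, nu μ y * Kpow μ n (y⁻¹ * g)) = nu μ y := by
        intro y
        rw [ENNReal.tsum_mul_left]
        have he : (∑' k : G, Kpow μ n (y⁻¹ * k)) = ∑' k : G, Kpow μ n k :=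
          Equiv.tsum_eq (Equiv.mulLeft y⁻¹) (Kpow μ n)
        rw [he, Kpow_mass hμ0 hμ1 n, mul_one]
      simp only [h1]
      exact nu_mass' hμ0 hμ1

lemma tsum_kop (H : Subgroup G) (K : G → ℝ≥0∞) (η : G ⧸ H → ℝ≥0∞) :
    ∑' x : G ⧸ H, kop H K η x = (∑' g : G, K g) * ∑' x : G ⧸ H, η x := by
  rw [show (∑' x : G ⧸ H, kop H K η x)
      = ∑' x : G ⧸ H, ∑' g : G, K g * η ((g⁻¹ : G) • x) from rfl]
  rw [ENNReal.tsum_comm, ← ENNReal.tsum_mul_right]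
  refine tsum_congr fun g => ?_
  rw [ENNReal.tsum_mul_left]
  congr 1
  exact Equiv.tsum_eq (MulAction.toPerm (g⁻¹ : G)) η

lemma tsum_rpow_eq_eLq_rpow {X : Type*} {q : ℝ} (hq : 0 < q) (η : X → ℝ≥0∞) :
    ∑' x : X, η x ^ q = eLq q η ^ q := by
  rw [eLq, ← ENNReal.rpow_mul, one_div, inv_mul_cancel₀ hq.ne', ENNReal.rpow_one]

lemma apply_le_one_of_eLq_le_one {X : Type*} {q : ℝ} (hq : 0 < q) {η : X → ℝ≥0∞}
    (h : eLq q η ≤ 1) (x : X) : η x ≤ 1 := by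
  have h1 : η x ^ q ≤ 1 := by
    refine le_trans (ENNReal.le_tsum (f := fun y => η y ^ q) x) ?_
    rw [tsum_rpow_eq_eLq_rpow hq]
    exact ENNReal.rpow_le_one h hq.le
  have h2 : (η x ^ q) ^ (1 / q) ≤ 1 := ENNReal.rpow_le_one h1 (by positivity)
  rwa [← ENNReal.rpow_mul, mul_one_div, div_self hq.ne', ENNReal.rpow_one] at h2

lemma eLq_eq_zero_forall {X : Type*} {q : ℝ} (hq : 0 < q) {η : X → ℝ≥0∞} (h : eLq q η = 0) :
    ∀ x, η x = 0 := by
  intro x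
  have h1 : η x ^ q ≤ 0 := by
    refine le_trans (ENNReal.le_tsum (f := fun y => η y ^ q) x) ?_
    rw [tsum_rpow_eq_eLq_rpow hq, h, ENNReal.zero_rpow_of_pos hq]
  rcases (ENNReal.rpow_eq_zero_iff).mp (le_antisymm h1 zero_le) with ⟨h2, _⟩ | ⟨_, h3⟩
  · exact h2
  · linarith

lemma kop_smul (H : Subgroup G) (K : G → ℝ≥0∞) (c : ℝ≥0∞) (η : G ⧸ H → ℝ≥0∞) (x : G ⧸ H) :
    kop H K (fun y => c * η y) x = c * kop H K η x := by
  rw [kop, kop, ← ENNReal.tsum_mul_left]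
  exact tsum_congr fun g => by ring

lemma eLq_smul {X : Type*} {q : ℝ} (hq : 0 < q) (c : ℝ≥0∞) (η : X → ℝ≥0∞) :
    eLq q (fun x => c * η x) = c * eLq q η := by
  rw [eLq, eLq]
  have h1 : ∀ x : X, (c * η x) ^ q = c ^ q * η x ^ q := fun x =>
    ENNReal.mul_rpow_of_nonneg _ _ hq.le
  simp only [h1]
  rw [ENNReal.tsum_mul_left, ENNReal.mul_rpow_of_nonneg _ _ (by positivity : (0:ℝ) ≤ 1/q),
    ← ENNReal.rpow_mul, mul_one_div, div_self hq.ne', ENNReal.rpow_one]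

/-- Markov contraction on `ℓ^q`, `q ≥ 1`, for mass-one kernels. -/
lemma eLq_kop_le_of_mass_one {K : G → ℝ≥0∞} (hK : ∑' g : G, K g = 1) {q : ℝ} (hq : 1 ≤ q)
    (η : G ⧸ H → ℝ≥0∞) : eLq q (kop H K η) ≤ eLq q η := by
  have hq0 : 0 < q := lt_of_lt_of_le one_pos hq
  have key : ∀ x : G ⧸ H, kop H K η x ^ q ≤ kop H K (fun y => η y ^ q) x := by
    intro x
    rcases eq_or_lt_of_le hq with hq1 | hq1
    · simp only [← hq1, ENNReal.rpow_one]
      exact le_refl _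
    · have hconj : Real.HolderConjugate (q / (q - 1)) q :=
        (Real.HolderConjugate.conjExponent hq1).symm
      set q' : ℝ := q / (q - 1) with hq'def
      have hq'0 : 0 < q' := hconj.pos
      have hstep : kop H K η x ≤ (kop H K (fun y => η y ^ q) x) ^ (1 / q) := by
        have hterm : ∀ g : G, K g * η ((g⁻¹ : G) • x)
            = (K g ^ q'⁻¹) * (K g ^ q⁻¹ * η ((g⁻¹ : G) • x)) := by
          intro g
          rw [← mul_assoc,
            ← ENNReal.rpow_add_of_nonneg _ _ (by positivity) (by positivity),
            hconj.inv_add_inv_eq_one, ENNReal.rpow_one]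
        calc kop H K η x
            = ∑' g : G, (K g ^ q'⁻¹) * (K g ^ q⁻¹ * η ((g⁻¹ : G) • x)) := tsum_congr hterm
          _ ≤ (∑' g : G, (K g ^ q'⁻¹) ^ q') ^ (1 / q')
              * (∑' g : G, (K g ^ q⁻¹ * η ((g⁻¹ : G) • x)) ^ q) ^ (1 / q) :=
              tsum_holder _ _ hconj
          _ = (kop H K (fun y => η y ^ q) x) ^ (1 / q) := by
              have e1 : ∀ g : G, (K g ^ q'⁻¹) ^ q' = K g := fun g => by
                rw [← ENNReal.rpow_mul, inv_mul_cancel₀ hq'0.ne', ENNReal.rpow_one]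
              have e2 : ∀ g : G, (K g ^ q⁻¹ * η ((g⁻¹ : G) • x)) ^ q
                  = K g * η ((g⁻¹ : G) • x) ^ q := fun g => by
                rw [ENNReal.mul_rpow_of_nonneg _ _ hq0.le, ← ENNReal.rpow_mul,
                  inv_mul_cancel₀ hq0.ne', ENNReal.rpow_one]
              simp only [e1, e2]
              rw [hK, ENNReal.one_rpow, one_mul]
              rfl
      calc kop H K η x ^ q ≤ ((kop H K (fun y => η y ^ q) x) ^ (1 / q)) ^ q :=
            ENNReal.rpow_le_rpow hstep hq0.le
        _ = kop H K (fun y => η y ^ q) x := by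
            rw [← ENNReal.rpow_mul, one_div, inv_mul_cancel₀ hq0.ne', ENNReal.rpow_one]
  refine ENNReal.rpow_le_rpow ?_ (by positivity : (0:ℝ) ≤ 1/q)
  calc ∑' x : G ⧸ H, kop H K η x ^ q
      ≤ ∑' x : G ⧸ H, kop H K (fun y => η y ^ q) x := ENNReal.tsum_le_tsum key
    _ = ∑' x : G ⧸ H, η x ^ q := by rw [tsum_kop, hK, one_mul]

lemma le_Sn {q : ℝ} {η : G ⧸ H → ℝ≥0∞} (h : eLq q η ≤ 1) (n : ℕ) :
    eLq q (kop H (Kpow μ n) η) ≤ Sn H μ q n :=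
  le_iSup (fun η : {η : G ⧸ H → ℝ≥0∞ // eLq q η ≤ 1} =>
    eLq q (kop H (Kpow μ n) η.1)) ⟨η, h⟩

lemma Sn_le_one (hμ0 : ∀ g, 0 ≤ μ g) (hμ1 : HasSum μ 1) {q : ℝ} (hq : 1 ≤ q) (n : ℕ) :
    Sn H μ q n ≤ 1 := by
  refine iSup_le ?_
  rintro ⟨η, hη⟩
  exact le_trans (eLq_kop_le_of_mass_one (Kpow_mass hμ0 hμ1 n) hq η) hη

/-- Operator bound: `‖A_n η‖_q ≤ S_n(q) ‖η‖_q` on the unit ball. -/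
lemma eLq_kop_Kpow_le {q : ℝ} (hq : 1 ≤ q) {η : G ⧸ H → ℝ≥0∞} (hη : eLq q η ≤ 1) (n : ℕ) :
    eLq q (kop H (Kpow μ n) η) ≤ Sn H μ q n * eLq q η := by
  have hq0 : 0 < q := lt_of_lt_of_le one_pos hq
  set L : ℝ≥0∞ := eLq q η with hL
  rcases eq_or_ne L 0 with h0 | h0
  · have hzero : ∀ x, η x = 0 := eLq_eq_zero_forall hq0 h0
    have hz : ∀ x, kop H (Kpow μ n) η x = 0 := by
      intro x
      rw [kop]
      simp [hzero]
    calc eLq q (kop H (Kpow μ n) η) = eLq q (fun _ => (0:ℝ≥0∞)) := by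
          congr 1; funext x; exact hz x
      _ = 0 := by
          rw [eLq]
          rw [show (∑' _x : G ⧸ H, (fun _ : G ⧸ H => (0:ℝ≥0∞)) _x ^ q) = 0 by
            simp [ENNReal.zero_rpow_of_pos hq0]]
          exact ENNReal.zero_rpow_of_pos (one_div_pos.mpr hq0)
      _ ≤ _ := zero_le
  · have hLtop : L ≠ ∞ := ne_top_of_le_ne_top ENNReal.one_ne_top hη
    set η' : G ⧸ H → ℝ≥0∞ := fun x => L⁻¹ * η x with hη'
    have hη'1 : eLq q η' ≤ 1 := by
      rw [hη', eLq_smul hq0, ← hL, ENNReal.inv_mul_cancel h0 hLtop]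
    have hrec : ∀ x, η x = L * η' x := by
      intro x
      rw [hη', ← mul_assoc, ENNReal.mul_inv_cancel h0 hLtop, one_mul]
    calc eLq q (kop H (Kpow μ n) η)
        = eLq q (fun x => L * kop H (Kpow μ n) η' x) := by
          congr 1; funext x
          rw [← kop_smul]
          congr 1; funext y; exact hrec y
      _ = L * eLq q (kop H (Kpow μ n) η') := eLq_smul hq0 _ _
      _ ≤ L * Sn H μ q n := mul_le_mul_right (le_Sn hη'1 n) L
      _ = Sn H μ q n * L := mul_comm _ _

/-- Stein interpolation for the positive operators `kop (Kpow n)`. -/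
lemma Sn_interp {q₀ q₁ q θ : ℝ} (hq₀ : 1 ≤ q₀) (hq₁ : 1 ≤ q₁)
    (hθ0 : 0 < θ) (hθ1 : θ < 1) (hq : 1/q = (1-θ)/q₀ + θ/q₁) (n : ℕ) :
    Sn H μ q n ≤ Sn H μ q₀ n ^ (1-θ) * Sn H μ q₁ n ^ θ := by
  have hq₀0 : 0 < q₀ := lt_of_lt_of_le one_pos hq₀
  have hq₁0 : 0 < q₁ := lt_of_lt_of_le one_pos hq₁
  have h1q : 0 < 1/q := by
    rw [hq]
    have := div_pos (by linarith : (0:ℝ) < 1 - θ) hq₀0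
    have := div_pos hθ0 hq₁0
    linarith
  have hqpos : 0 < q := by
    rcases lt_trichotomy q 0 with h | h | h
    · exfalso; have : 1/q < 0 := one_div_neg.mpr h
      linarith
    · exfalso; rw [h] at h1q; simp at h1q
    · exact h
  set a : ℝ := q / q₀ with ha
  set b : ℝ := q / q₁ with hb
  have ha0 : 0 < a := div_pos hqpos hq₀0
  have hb0 : 0 < b := div_pos hqpos hq₁0
  have key : a * (1 - θ) + b * θ = 1 := by
    have h2 : q * (1/q) = q * ((1-θ)/q₀ + θ/q₁) := by rw [hq]
    rw [mul_one_div, div_self hqpos.ne'] at h2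
    rw [ha, hb]
    field_simp at h2 ⊢
    linarith [h2]
  set σ : ℝ := b * θ with hσ
  have hσ0 : 0 < σ := mul_pos hb0 hθ0
  have h1σ : 1 - σ = a * (1 - θ) := by linarith
  have h1σ0 : 0 < 1 - σ := by rw [h1σ]; exact mul_pos ha0 (by linarith)
  refine iSup_le ?_
  rintro ⟨η, hη⟩
  set A := kop H (Kpow μ n) with hA
  have hpt : ∀ x : G ⧸ H,
      A η x ≤ (A (fun y => η y ^ a) x) ^ (1-θ) * (A (fun y => η y ^ b) x) ^ θ := by
    intro x
    have hterm : ∀ g : G, Kpow μ n g * η ((g⁻¹ : G) • x)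
        = (Kpow μ n g * η ((g⁻¹ : G) • x) ^ a) ^ (1-θ)
          * (Kpow μ n g * η ((g⁻¹ : G) • x) ^ b) ^ θ := by
      intro g
      rw [ENNReal.mul_rpow_of_nonneg _ _ (by linarith : (0:ℝ) ≤ 1-θ),
        ENNReal.mul_rpow_of_nonneg _ _ hθ0.le]
      rw [show (Kpow μ n g ^ (1-θ)) * (η ((g⁻¹ : G) • x) ^ a) ^ (1-θ)
          * (Kpow μ n g ^ θ * (η ((g⁻¹ : G) • x) ^ b) ^ θ)
          = (Kpow μ n g ^ (1-θ) * Kpow μ n g ^ θ)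
            * ((η ((g⁻¹ : G) • x) ^ a) ^ (1-θ) * (η ((g⁻¹ : G) • x) ^ b) ^ θ) by ring]
      rw [← ENNReal.rpow_add_of_nonneg _ _ (by linarith : (0:ℝ) ≤ 1-θ) hθ0.le]
      rw [← ENNReal.rpow_mul, ← ENNReal.rpow_mul,
        ← ENNReal.rpow_add_of_nonneg _ _ (mul_nonneg ha0.le (by linarith))
          (mul_nonneg hb0.le hθ0.le)]
      rw [show (1 - θ) + θ = 1 by ring, ENNReal.rpow_one]
      rw [show a * (1-θ) + b * θ = 1 from key, ENNReal.rpow_one]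
    calc A η x = ∑' g : G, (Kpow μ n g * η ((g⁻¹ : G) • x) ^ a) ^ (1-θ)
          * (Kpow μ n g * η ((g⁻¹ : G) • x) ^ b) ^ θ := tsum_congr hterm
      _ ≤ (∑' g : G, Kpow μ n g * η ((g⁻¹ : G) • x) ^ a) ^ (1-θ)
          * (∑' g : G, Kpow μ n g * η ((g⁻¹ : G) • x) ^ b) ^ θ :=
          tsum_holder_weights _ _ (by linarith) hθ0.le (by ring)
      _ = (A (fun y => η y ^ a) x) ^ (1-θ) * (A (fun y => η y ^ b) x) ^ θ := rfl
  have hηq : ∑' x : G ⧸ H, η x ^ q ≤ 1 := by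
    rw [tsum_rpow_eq_eLq_rpow hqpos]
    exact ENNReal.rpow_le_one hη hqpos.le
  have hball_a : eLq q₀ (fun y => η y ^ a) ≤ 1 := by
    rw [eLq]
    have e : ∀ y : G ⧸ H, (η y ^ a) ^ q₀ = η y ^ q := by
      intro y
      rw [← ENNReal.rpow_mul, ha, div_mul_cancel₀ _ hq₀0.ne']
    simp only [e]
    exact ENNReal.rpow_le_one hηq (by positivity)
  have hball_b : eLq q₁ (fun y => η y ^ b) ≤ 1 := by
    rw [eLq]
    have e : ∀ y : G ⧸ H, (η y ^ b) ^ q₁ = η y ^ q := by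
      intro y
      rw [← ENNReal.rpow_mul, hb, div_mul_cancel₀ _ hq₁0.ne']
    simp only [e]
    exact ENNReal.rpow_le_one hηq (by positivity)
  have hsum : ∑' x : G ⧸ H, A η x ^ q
      ≤ (∑' x : G ⧸ H, (A (fun y => η y ^ a) x) ^ q₀) ^ (1-σ)
        * (∑' x : G ⧸ H, (A (fun y => η y ^ b) x) ^ q₁) ^ σ := by
    calc ∑' x : G ⧸ H, A η x ^ q
        ≤ ∑' x : G ⧸ H, ((A (fun y => η y ^ a) x) ^ q₀) ^ (1-σ)
            * ((A (fun y => η y ^ b) x) ^ q₁) ^ σ := by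
          refine ENNReal.tsum_le_tsum fun x => ?_
          calc A η x ^ q
              ≤ ((A (fun y => η y ^ a) x) ^ (1-θ) * (A (fun y => η y ^ b) x) ^ θ) ^ q :=
                ENNReal.rpow_le_rpow (hpt x) hqpos.le
            _ = ((A (fun y => η y ^ a) x) ^ q₀) ^ (1-σ)
                * ((A (fun y => η y ^ b) x) ^ q₁) ^ σ := by
                rw [ENNReal.mul_rpow_of_nonneg _ _ hqpos.le,
                  ← ENNReal.rpow_mul, ← ENNReal.rpow_mul,
                  ← ENNReal.rpow_mul, ← ENNReal.rpow_mul]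
                congr 1
                · congr 1
                  rw [h1σ]; rw [ha]; field_simp
                · congr 1
                  rw [hσ, hb]; field_simp
      _ ≤ _ := tsum_holder_weights _ _ h1σ0.le hσ0.le (by linarith)
  have hfin₀ : ∑' x : G ⧸ H, (A (fun y => η y ^ a) x) ^ q₀ ≤ Sn H μ q₀ n ^ q₀ := by
    rw [tsum_rpow_eq_eLq_rpow hq₀0]
    exact ENNReal.rpow_le_rpow
      (le_trans (eLq_kop_Kpow_le hq₀ hball_a n) (mul_le_of_le_one_right' hball_a)) hq₀0.le
  have hfin₁ : ∑' x : G ⧸ H, (A (fun y => η y ^ b) x) ^ q₁ ≤ Sn H μ q₁ n ^ q₁ := by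
    rw [tsum_rpow_eq_eLq_rpow hq₁0]
    exact ENNReal.rpow_le_rpow
      (le_trans (eLq_kop_Kpow_le hq₁ hball_b n) (mul_le_of_le_one_right' hball_b)) hq₁0.le
  calc eLq q (A η) = (∑' x : G ⧸ H, A η x ^ q) ^ (1/q) := rfl
    _ ≤ ((Sn H μ q₀ n ^ q₀) ^ (1-σ) * (Sn H μ q₁ n ^ q₁) ^ σ) ^ (1/q) := by
        refine ENNReal.rpow_le_rpow ?_ (by positivity)
        refine le_trans hsum (mul_le_mul' ?_ ?_)
        · exact ENNReal.rpow_le_rpow hfin₀ h1σ0.le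
        · exact ENNReal.rpow_le_rpow hfin₁ hσ0.le
    _ = Sn H μ q₀ n ^ (1-θ) * Sn H μ q₁ n ^ θ := by
        rw [ENNReal.mul_rpow_of_nonneg _ _ (by positivity : (0:ℝ) ≤ 1/q),
          ← ENNReal.rpow_mul, ← ENNReal.rpow_mul, ← ENNReal.rpow_mul, ← ENNReal.rpow_mul]
        congr 1
        · congr 1
          rw [h1σ, ha]; field_simp
        · congr 1
          rw [hσ, hb]; field_simp

lemma Rq_le_one (hμ0 : ∀ g, 0 ≤ μ g) (hμ1 : HasSum μ 1) {q : ℝ} (hq : 1 ≤ q) :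
    Rq H μ q ≤ 1 := by
  refine le_trans (iInf_le _ 0) ?_
  exact ENNReal.rpow_le_one (Sn_le_one hμ0 hμ1 hq 1) (by norm_num)

/-- Key inequality: interpolating against the `ℓ¹` endpoint. -/
lemma Rq_le (hμ0 : ∀ g, 0 ≤ μ g) (hμ1 : HasSum μ 1) {q₀ q θ : ℝ} (hq₀ : 1 ≤ q₀)
    (hθ0 : 0 < θ) (hθ1 : θ < 1) (hq : 1/q = (1-θ)/q₀ + θ) :
    Rq H μ q ≤ Rq H μ q₀ ^ (1-θ) := by
  have hc : 0 < 1 - θ := by linarith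
  set f : ℕ → ℝ≥0∞ := fun m => Sn H μ q₀ (m + 1) ^ (1 / (m + 1 : ℝ)) with hf
  have h1 : ∀ m : ℕ, Rq H μ q ≤ f m ^ (1 - θ) := by
    intro m
    have hm0 : (0:ℝ) < 1 / (m + 1 : ℝ) := by positivity
    calc Rq H μ q ≤ Sn H μ q (m + 1) ^ (1 / (m + 1 : ℝ)) := iInf_le _ m
      _ ≤ (Sn H μ q₀ (m + 1) ^ (1-θ) * Sn H μ 1 (m + 1) ^ θ) ^ (1 / (m + 1 : ℝ)) := by
          refine ENNReal.rpow_le_rpow ?_ hm0.le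
          exact Sn_interp hq₀ le_rfl hθ0 hθ1 (by rw [hq]; rw [div_one]) (m + 1)
      _ ≤ (Sn H μ q₀ (m + 1) ^ (1-θ) * 1) ^ (1 / (m + 1 : ℝ)) := by
          refine ENNReal.rpow_le_rpow ?_ hm0.le
          exact mul_le_mul_right
            (ENNReal.rpow_le_one (Sn_le_one hμ0 hμ1 le_rfl (m+1)) hθ0.le) _
      _ = f m ^ (1 - θ) := by
          rw [mul_one, ← ENNReal.rpow_mul, ← ENNReal.rpow_mul]
          congr 1
          ring
  calc Rq H μ q ≤ ⨅ m : ℕ, f m ^ (1 - θ) := le_iInf h1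
    _ = ((⨅ m : ℕ, f m ^ (1 - θ)) ^ (1/(1-θ))) ^ (1-θ) := by
        rw [← ENNReal.rpow_mul, one_div, inv_mul_cancel₀ hc.ne', ENNReal.rpow_one]
    _ ≤ (⨅ m : ℕ, f m) ^ (1-θ) := by
        refine ENNReal.rpow_le_rpow (le_iInf fun m => ?_) hc.le
        calc (⨅ m : ℕ, f m ^ (1 - θ)) ^ (1/(1-θ))
            ≤ (f m ^ (1-θ)) ^ (1/(1-θ)) :=
              ENNReal.rpow_le_rpow (iInf_le _ m) (by positivity)
          _ = f m := by
              rw [← ENNReal.rpow_mul, mul_one_div, div_self hc.ne', ENNReal.rpow_one]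
    _ = Rq H μ q₀ ^ (1-θ) := rfl

/-- Pointwise domination of the complex operator by the positive kernel operator. -/
lemma lam_norm_le (hμ0 : ∀ g, 0 ≤ μ g) (ξ : G ⧸ H → ℂ) (x : G ⧸ H) :
    ENNReal.ofReal ‖lam H (fun g => (μ g : ℂ)) ξ x‖
      ≤ kop H (nu μ) (fun y => ENNReal.ofReal ‖ξ y‖) x := by
  by_cases hs : Summable (fun g : G => (μ g : ℂ) * ξ ((g⁻¹ : G) • x))
  · have hn : Summable (fun g : G => ‖(μ g : ℂ) * ξ ((g⁻¹ : G) • x)‖) :=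
      summable_norm_iff.mpr hs
    calc ENNReal.ofReal ‖lam H (fun g => (μ g : ℂ)) ξ x‖
        ≤ ENNReal.ofReal (∑' g : G, ‖(μ g : ℂ) * ξ ((g⁻¹ : G) • x)‖) :=
          ENNReal.ofReal_le_ofReal (norm_tsum_le_tsum_norm hn)
      _ = ∑' g : G, ENNReal.ofReal ‖(μ g : ℂ) * ξ ((g⁻¹ : G) • x)‖ :=
          ENNReal.ofReal_tsum_of_nonneg (fun _ => norm_nonneg _) hn
      _ = kop H (nu μ) (fun y => ENNReal.ofReal ‖ξ y‖) x := by
          refine tsum_congr fun g => ?_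
          rw [norm_mul, Complex.norm_real, Real.norm_eq_abs, abs_of_nonneg (hμ0 g),
            ENNReal.ofReal_mul (hμ0 g)]
          rfl
  · rw [lam, tsum_eq_zero_of_not_summable hs]
    simp

lemma lam_iterate_norm_le (hμ0 : ∀ g, 0 ≤ μ g) (ξ : G ⧸ H → ℂ) (n : ℕ) (x : G ⧸ H) :
    ENNReal.ofReal ‖(lam H (fun g => (μ g : ℂ)))^[n] ξ x‖
      ≤ (kop H (nu μ))^[n] (fun y => ENNReal.ofReal ‖ξ y‖) x := by
  induction n generalizing x with
  | zero => simp
  | succ n ih =>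
      rw [Function.iterate_succ_apply', Function.iterate_succ_apply']
      calc ENNReal.ofReal ‖lam H (fun g => (μ g : ℂ)) ((lam H (fun g => (μ g : ℂ)))^[n] ξ) x‖
          ≤ kop H (nu μ) (fun y =>
              ENNReal.ofReal ‖(lam H (fun g => (μ g : ℂ)))^[n] ξ y‖) x := lam_norm_le hμ0 _ x
        _ ≤ kop H (nu μ) ((kop H (nu μ))^[n] (fun y => ENNReal.ofReal ‖ξ y‖)) x :=
            kop_mono (fun y => ih y) x

lemma opNorm_le_Sn (hμ0 : ∀ g, 0 ≤ μ g) {q : ℝ} (hq : 0 < q) (n : ℕ) :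
    opNorm q ((lam H (fun g => (μ g : ℂ)))^[n]) ≤ Sn H μ q n := by
  refine iSup_le ?_
  rintro ⟨ξ, hξ⟩
  have hξ' : eLq q (fun y => ENNReal.ofReal ‖ξ y‖) ≤ 1 := hξ
  have h1 : lqNorm q ((lam H (fun g => (μ g : ℂ)))^[n] ξ)
      ≤ eLq q (kop H (Kpow μ n) (fun y => ENNReal.ofReal ‖ξ y‖)) := by
    rw [← kop_iterate]
    refine ENNReal.rpow_le_rpow (ENNReal.tsum_le_tsum fun x => ?_) (by positivity)
    exact ENNReal.rpow_le_rpow (lam_iterate_norm_le hμ0 ξ n x) hq.le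
  refine h1.trans ?_
  exact le_iSup (fun η : {η : G ⧸ H → ℝ≥0∞ // eLq q η ≤ 1} =>
    eLq q (kop H (Kpow μ n) η.1)) ⟨_, hξ'⟩

lemma Sn_le_opNorm (hμ0 : ∀ g, 0 ≤ μ g) (hμ1 : HasSum μ 1) {q : ℝ} (hq : 0 < q) (n : ℕ) :
    Sn H μ q n ≤ opNorm q ((lam H (fun g => (μ g : ℂ)))^[n]) := by
  refine iSup_le ?_
  rintro ⟨η, hη⟩
  have hfin : ∀ x, η x ≤ 1 := apply_le_one_of_eLq_le_one hq hη
  set ξ : G ⧸ H → ℂ := fun x => ((η x).toReal : ℂ) with hξdef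
  have hkey : ∀ k : ℕ, (∀ x, (kop H (nu μ))^[k] η x ≤ 1) ∧
      (∀ x, (lam H (fun g => (μ g : ℂ)))^[k] ξ x = (((kop H (nu μ))^[k] η x).toReal : ℂ)) := by
    intro k
    induction k with
    | zero => exact ⟨hfin, fun x => rfl⟩
    | succ k ih =>
        constructor
        · intro x
          rw [Function.iterate_succ_apply']
          calc kop H (nu μ) ((kop H (nu μ))^[k] η) x
              ≤ kop H (nu μ) (fun _ => 1) x := kop_mono (fun y => ih.1 y) x
            _ = 1 := by rw [kop]; simp [nu_mass' hμ0 hμ1]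
        · intro x
          rw [Function.iterate_succ_apply', Function.iterate_succ_apply']
          set ηk := (kop H (nu μ))^[k] η with hηk
          have hterm_ne_top : ∀ g : G, nu μ g * ηk ((g⁻¹ : G) • x) ≠ ∞ :=
            fun g => ENNReal.mul_ne_top ENNReal.ofReal_ne_top
              (ne_top_of_le_ne_top ENNReal.one_ne_top (ih.1 _))
          have hsummable : Summable (fun g : G => μ g * (ηk ((g⁻¹ : G) • x)).toReal) := by
            refine Summable.of_nonneg_of_le
              (fun g => mul_nonneg (hμ0 g) ENNReal.toReal_nonneg)
              (fun g => ?_) hμ1.summable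
            have h1 : (ηk ((g⁻¹ : G) • x)).toReal ≤ 1 := by
              have := ENNReal.toReal_mono ENNReal.one_ne_top (ih.1 ((g⁻¹ : G) • x))
              simpa using this
            calc μ g * (ηk ((g⁻¹ : G) • x)).toReal ≤ μ g * 1 :=
                  mul_le_mul_of_nonneg_left h1 (hμ0 g)
              _ = μ g := mul_one _
          calc lam H (fun g => (μ g : ℂ)) ((lam H (fun g => (μ g : ℂ)))^[k] ξ) x
              = ∑' g : G, (μ g : ℂ) * ((ηk ((g⁻¹ : G) • x)).toReal : ℂ) := by
                rw [lam]
                exact tsum_congr fun g => by rw [ih.2]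
            _ = ∑' g : G, ((μ g * (ηk ((g⁻¹ : G) • x)).toReal : ℝ) : ℂ) :=
                tsum_congr fun g => by push_cast; ring
            _ = ((∑' g : G, μ g * (ηk ((g⁻¹ : G) • x)).toReal : ℝ) : ℂ) :=
                (Complex.ofReal_tsum _).symm
            _ = (((kop H (nu μ)) ηk x).toReal : ℂ) := by
                congr 1
                rw [kop, ENNReal.tsum_toReal_eq hterm_ne_top]
                exact tsum_congr fun g => by
                  rw [ENNReal.toReal_mul, nu, ENNReal.toReal_ofReal (hμ0 g)]
  have hnorm : ∀ k : ℕ, ∀ x : G ⧸ H,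
      ENNReal.ofReal ‖(lam H (fun g => (μ g : ℂ)))^[k] ξ x‖ = (kop H (nu μ))^[k] η x := by
    intro k x
    rw [(hkey k).2 x, Complex.norm_real, Real.norm_eq_abs,
      abs_of_nonneg ENNReal.toReal_nonneg,
      ENNReal.ofReal_toReal (ne_top_of_le_ne_top ENNReal.one_ne_top ((hkey k).1 x))]
  have hξball : lqNorm q ξ ≤ 1 := by
    have heq0 : lqNorm q ξ = eLq q η := by
      rw [lqNorm, eLq]
      congr 1
      refine tsum_congr fun x => ?_
      have h0 := hnorm 0 x
      simp only [Function.iterate_zero, id_eq] at h0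
      rw [h0]
    rw [heq0]; exact hη
  have heq : eLq q (kop H (Kpow μ n) η) = lqNorm q ((lam H (fun g => (μ g : ℂ)))^[n] ξ) := by
    rw [← kop_iterate, lqNorm, eLq]
    congr 1
    exact tsum_congr fun x => by rw [hnorm n x]
  rw [heq]
  exact le_iSup (fun ξ : {ξ : G ⧸ H → ℂ // lqNorm q ξ ≤ 1} =>
    lqNorm q ((lam H (fun g => (μ g : ℂ)))^[n] ξ.1)) ⟨ξ, hξball⟩

lemma specRad_eq_Rq (hμ0 : ∀ g, 0 ≤ μ g) (hμ1 : HasSum μ 1) {q : ℝ} (hq : 0 < q) :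
    specRad H μ q = (Rq H μ q).toReal := by
  rw [specRad, Rq]
  congr 1
  exact iInf_congr fun n => by
    rw [le_antisymm (opNorm_le_Sn hμ0 hq (n+1)) (Sn_le_opNorm hμ0 hμ1 hq (n+1))]

end Stmt0Aux


/-- For a countable discrete group `G`, a subgroup `H ≤ G`, and a
probability measure `μ` on `G` with `r_q(μ) > 0` for all `q ∈ (1,2]`, the function
`p ↦ -p · log r_{p/(p-1)}(μ)` is monotonically increasing on `[2,∞)`. -/
theorem statement0 {G : Type*} [Group G] [Countable G] (H : Subgroup G)
    (μ : G → ℝ) (hμ0 : ∀ g, 0 ≤ μ g) (hμ1 : HasSum μ 1)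
    (hpos : ∀ q : ℝ, 1 < q → q ≤ 2 → 0 < PaperRD.specRad H μ q)
    (p₀ p₁ : ℝ) (hp₀ : 2 ≤ p₀) (hp : p₀ ≤ p₁) :
    -p₀ * Real.log (PaperRD.specRad H μ (p₀ / (p₀ - 1))) ≤
      -p₁ * Real.log (PaperRD.specRad H μ (p₁ / (p₁ - 1))) := by
  rcases eq_or_lt_of_le hp with heq | hplt
  · rw [heq]
  have hp₁ : 2 ≤ p₁ := le_trans hp₀ hp
  have hp₀0 : (0:ℝ) < p₀ - 1 := by linarith
  have hp₁0 : (0:ℝ) < p₁ - 1 := by linarith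
  have hp₀pos : (0:ℝ) < p₀ := by linarith
  have hp₁pos : (0:ℝ) < p₁ := by linarith
  set q₀ : ℝ := p₀ / (p₀ - 1) with hq₀def
  set q₁ : ℝ := p₁ / (p₁ - 1) with hq₁def
  have hq₀1 : 1 < q₀ := by rw [hq₀def, lt_div_iff₀ hp₀0]; linarith
  have hq₀2 : q₀ ≤ 2 := by rw [hq₀def, div_le_iff₀ hp₀0]; linarith
  have hq₁1 : 1 < q₁ := by rw [hq₁def, lt_div_iff₀ hp₁0]; linarith
  have hq₁2 : q₁ ≤ 2 := by rw [hq₁def, div_le_iff₀ hp₁0]; linarith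
  set θ : ℝ := 1 - p₀ / p₁ with hθdef
  have hratio0 : 0 < p₀ / p₁ := div_pos hp₀pos hp₁pos
  have hratio1 : p₀ / p₁ < 1 := (div_lt_one hp₁pos).mpr hplt
  have hθ0 : 0 < θ := by rw [hθdef]; linarith
  have hθ1 : θ < 1 := by rw [hθdef]; linarith
  have hrel : 1/q₁ = (1-θ)/q₀ + θ := by
    rw [hq₀def, hq₁def, hθdef]
    field_simp
    ring
  have hineq : Stmt0Aux.Rq H μ q₁ ≤ Stmt0Aux.Rq H μ q₀ ^ (1-θ) :=
    Stmt0Aux.Rq_le hμ0 hμ1 hq₀1.le hθ0 hθ1 hrel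
  have hr₀top : Stmt0Aux.Rq H μ q₀ ≠ ∞ :=
    ne_top_of_le_ne_top ENNReal.one_ne_top (Stmt0Aux.Rq_le_one hμ0 hμ1 hq₀1.le)
  have hspec₀ : PaperRD.specRad H μ q₀ = (Stmt0Aux.Rq H μ q₀).toReal :=
    Stmt0Aux.specRad_eq_Rq hμ0 hμ1 (by linarith)
  have hspec₁ : PaperRD.specRad H μ q₁ = (Stmt0Aux.Rq H μ q₁).toReal :=
    Stmt0Aux.specRad_eq_Rq hμ0 hμ1 (by linarith)
  have hrle : PaperRD.specRad H μ q₁ ≤ PaperRD.specRad H μ q₀ ^ (1-θ) := by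
    rw [hspec₀, hspec₁, ENNReal.toReal_rpow]
    exact ENNReal.toReal_mono (ENNReal.rpow_ne_top_of_nonneg (by linarith) hr₀top) hineq
  have hr₀pos : 0 < PaperRD.specRad H μ q₀ := hpos q₀ hq₀1 hq₀2
  have hr₁pos : 0 < PaperRD.specRad H μ q₁ := hpos q₁ hq₁1 hq₁2
  have hlog : Real.log (PaperRD.specRad H μ q₁)
      ≤ (1-θ) * Real.log (PaperRD.specRad H μ q₀) := by
    have h1 : Real.log (PaperRD.specRad H μ q₁)
        ≤ Real.log (PaperRD.specRad H μ q₀ ^ (1-θ)) :=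
      (Real.log_le_log_iff hr₁pos (Real.rpow_pos_of_pos hr₀pos _)).mpr hrle
    rwa [Real.log_rpow hr₀pos] at h1
  have h2 : p₁ * Real.log (PaperRD.specRad H μ q₁)
      ≤ p₁ * ((1-θ) * Real.log (PaperRD.specRad H μ q₀)) :=
    mul_le_mul_of_nonneg_left hlog hp₁pos.le
  have h3 : p₁ * ((1-θ) * Real.log (PaperRD.specRad H μ q₀))
      = p₀ * Real.log (PaperRD.specRad H μ q₀) := by
    rw [hθdef]
    field_simp
    ring
  nlinarith [h2, h3]
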